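/- Fix constants ρ̄ > 0, θ̄ > 0, μ̄ > 0, ᾱ > 0, τ̄₄ > 0, and ū ∈ ℝ³. For ξ ∈ ℝ³ with ξ ≠ 0, set ω = ξ/|ξ| and β(ξ) = √(3/(2θ̄)) ( (2/3)θ̄ + (8/(9ρ̄)) τ̄₄ |ξ|² ), and define the 5×5 real block matrices A_S(ξ) = [[ū·ω, √θ̄ ωᵀ, 0], [√θ̄ ω, (ū·ω) I₃, β(ξ) ω], [0, β(ξ) ωᵀ, ū·ω]] and B̄_S = [[0, 0, 0], [0, (μ̄/ρ̄) I₃ + (μ̄/(3ρ̄)) ω⊗ω, 0], [0, 0, (2/3)(ᾱ/ρ̄)]]. Then for every ξ ≠ 0: B̄_S is positive semidefinite, its kernel equals span{(1,0,0,0,0)}, and the pair (A_S(ξ), B̄_S) is genuinely coupled, i.e., for every μ ∈ ℝ and every ψ ∈ ℝ⁵ with ψ ≠ 0 and B̄_S ψ = 0, one has (μI + A_S(ξ))ψ ≠ 0. -/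

import Mathlib

open Matrix

set_option maxHeartbeats 1000000

/-- Genuine coupling of a pair of real matrices `(A, B)`: no eigenvector of `A`
lies in the kernel of `B`. -/
def GenuinelyCoupled {n : ℕ} (A B : Matrix (Fin n) (Fin n) ℝ) : Prop :=
  ∀ (μ : ℝ) (ψ : Fin n → ℝ), ψ ≠ 0 → B *ᵥ ψ = 0 →
    (μ • (1 : Matrix (Fin n) (Fin n) ℝ) + A) *ᵥ ψ ≠ 0

/-- For the symmetrized symbols of the linearized three-dimensional
dispersive Navier–Stokes–Fourier system of Levermore and Sun, the generalized viscosity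
symbol `B̄_S` is positive semidefinite with kernel `span{(1,0,0,0,0)}`, and the pair
`(A_S(ξ), B̄_S)` is genuinely coupled, for every `ξ ≠ 0`. -/
theorem DNSF_genuinely_coupled (ρ θ₀ μ₀ α τ₄ : ℝ) (u : Fin 3 → ℝ)
    (hρ : 0 < ρ) (hθ₀ : 0 < θ₀) (hμ₀ : 0 < μ₀) (hα : 0 < α) (hτ : 0 < τ₄)
    (ξ : Fin 3 → ℝ) (hξ : ξ ≠ 0) :
    let nξ2 := ξ 0 ^ 2 + ξ 1 ^ 2 + ξ 2 ^ 2
    let ω : Fin 3 → ℝ := fun i => ξ i / Real.sqrt nξ2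
    let β := Real.sqrt (3 / (2 * θ₀)) * ((2 / 3) * θ₀ + (8 / (9 * ρ)) * τ₄ * nξ2)
    let sθ := Real.sqrt θ₀
    let uω := u 0 * ω 0 + u 1 * ω 1 + u 2 * ω 2
    let AS : Matrix (Fin 5) (Fin 5) ℝ :=
      !![uω, sθ * ω 0, sθ * ω 1, sθ * ω 2, 0;
         sθ * ω 0, uω, 0, 0, β * ω 0;
         sθ * ω 1, 0, uω, 0, β * ω 1;
         sθ * ω 2, 0, 0, uω, β * ω 2;
         0, β * ω 0, β * ω 1, β * ω 2, uω]
    let BS : Matrix (Fin 5) (Fin 5) ℝ :=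
      !![0, 0, 0, 0, 0;
         0, μ₀ / ρ + (μ₀ / (3 * ρ)) * ω 0 ^ 2, (μ₀ / (3 * ρ)) * ω 0 * ω 1,
           (μ₀ / (3 * ρ)) * ω 0 * ω 2, 0;
         0, (μ₀ / (3 * ρ)) * ω 1 * ω 0, μ₀ / ρ + (μ₀ / (3 * ρ)) * ω 1 ^ 2,
           (μ₀ / (3 * ρ)) * ω 1 * ω 2, 0;
         0, (μ₀ / (3 * ρ)) * ω 2 * ω 0, (μ₀ / (3 * ρ)) * ω 2 * ω 1,
           μ₀ / ρ + (μ₀ / (3 * ρ)) * ω 2 ^ 2, 0;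
         0, 0, 0, 0, (2 / 3) * (α / ρ)]
    BS.PosSemidef ∧
    (∀ ψ : Fin 5 → ℝ, BS *ᵥ ψ = 0 ↔ ∃ t : ℝ, ψ = t • ![1, 0, 0, 0, 0]) ∧
    GenuinelyCoupled AS BS := by
  intro nξ2 ω β sθ uω AS BS
  have hn : 0 < nξ2 := by
    by_contra h
    push_neg at h
    simp only [nξ2] at h
    apply hξ
    funext i
    have h0 : ξ 0 ^ 2 = 0 := by nlinarith [sq_nonneg (ξ 0), sq_nonneg (ξ 1), sq_nonneg (ξ 2)]
    have h1 : ξ 1 ^ 2 = 0 := by nlinarith [sq_nonneg (ξ 0), sq_nonneg (ξ 1), sq_nonneg (ξ 2)]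
    have h2 : ξ 2 ^ 2 = 0 := by nlinarith [sq_nonneg (ξ 0), sq_nonneg (ξ 1), sq_nonneg (ξ 2)]
    fin_cases i
    · show ξ 0 = 0; exact pow_eq_zero_iff (by norm_num) |>.mp h0
    · show ξ 1 = 0; exact pow_eq_zero_iff (by norm_num) |>.mp h1
    · show ξ 2 = 0; exact pow_eq_zero_iff (by norm_num) |>.mp h2
  have hs : (0:ℝ) < Real.sqrt nξ2 := Real.sqrt_pos.mpr hn
  have hsq : Real.sqrt nξ2 ^ 2 = nξ2 := Real.sq_sqrt hn.le
  have hω : ω 0 ^ 2 + ω 1 ^ 2 + ω 2 ^ 2 = 1 := by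
    simp only [ω, div_pow, hsq]
    rw [← add_div, ← add_div]
    exact div_self hn.ne'
  have hsθ : (0:ℝ) < sθ := Real.sqrt_pos.mpr hθ₀
  have hμρ : (0:ℝ) < μ₀ / ρ := by positivity
  have hcρ : (0:ℝ) < μ₀ / (3 * ρ) := by positivity
  have hαρ : (0:ℝ) < (2 / 3) * (α / ρ) := by positivity
  -- mulVec formula for BS
  have hBmv : ∀ ψ : Fin 5 → ℝ, BS *ᵥ ψ =
      ![0,
        (μ₀ / ρ) * ψ 1 + (μ₀ / (3 * ρ)) * ω 0 * (ω 0 * ψ 1 + ω 1 * ψ 2 + ω 2 * ψ 3),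
        (μ₀ / ρ) * ψ 2 + (μ₀ / (3 * ρ)) * ω 1 * (ω 0 * ψ 1 + ω 1 * ψ 2 + ω 2 * ψ 3),
        (μ₀ / ρ) * ψ 3 + (μ₀ / (3 * ρ)) * ω 2 * (ω 0 * ψ 1 + ω 1 * ψ 2 + ω 2 * ψ 3),
        (2 / 3) * (α / ρ) * ψ 4] := by
    intro ψ
    funext i
    fin_cases i <;>
      simp [BS, Matrix.mulVec, dotProduct, Fin.sum_univ_five] <;> ring
  have hψeq : ∀ t : ℝ, t • ![(1:ℝ), 0, 0, 0, 0] = ![t, 0, 0, 0, 0] := by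
    intro t; funext i; fin_cases i <;> simp
  -- kernel characterization
  have hker : ∀ ψ : Fin 5 → ℝ, BS *ᵥ ψ = 0 ↔ ∃ t : ℝ, ψ = t • ![1, 0, 0, 0, 0] := by
    intro ψ
    constructor
    · intro h
      rw [hBmv] at h
      have h1 : (μ₀ / ρ) * ψ 1 + (μ₀ / (3 * ρ)) * ω 0 *
          (ω 0 * ψ 1 + ω 1 * ψ 2 + ω 2 * ψ 3) = 0 := by
        simpa only [Matrix.cons_val_one, Matrix.cons_val_zero, Matrix.head_cons, Pi.zero_apply] using congrFun h 1
      have h2 : (μ₀ / ρ) * ψ 2 + (μ₀ / (3 * ρ)) * ω 1 *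
          (ω 0 * ψ 1 + ω 1 * ψ 2 + ω 2 * ψ 3) = 0 := by
        simpa only [Matrix.cons_val_two, Matrix.tail_cons, Matrix.head_cons, Pi.zero_apply]
          using congrFun h 2
      have h3 : (μ₀ / ρ) * ψ 3 + (μ₀ / (3 * ρ)) * ω 2 *
          (ω 0 * ψ 1 + ω 1 * ψ 2 + ω 2 * ψ 3) = 0 := by
        simpa only [Matrix.cons_val_three, Matrix.tail_cons, Matrix.head_cons, Pi.zero_apply]
          using congrFun h 3
      have h4 : (2 / 3) * (α / ρ) * ψ 4 = 0 := by
        simpa only [Matrix.cons_val_four, Matrix.tail_cons, Matrix.head_cons, Pi.zero_apply]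
          using congrFun h 4
      have key : (μ₀ / ρ + μ₀ / (3 * ρ)) * (ω 0 * ψ 1 + ω 1 * ψ 2 + ω 2 * ψ 3) = 0 := by
        linear_combination ω 0 * h1 + ω 1 * h2 + ω 2 * h3 -
          (μ₀ / (3 * ρ) * (ω 0 * ψ 1 + ω 1 * ψ 2 + ω 2 * ψ 3)) * hω
      have hs0 : ω 0 * ψ 1 + ω 1 * ψ 2 + ω 2 * ψ 3 = 0 :=
        (mul_eq_zero.mp key).resolve_left (by positivity)
      have hψ1 : ψ 1 = 0 := by
        have h1' : (μ₀ / ρ) * ψ 1 = 0 := by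
          linear_combination h1 - (μ₀ / (3 * ρ) * ω 0) * hs0
        exact (mul_eq_zero.mp h1').resolve_left hμρ.ne'
      have hψ2 : ψ 2 = 0 := by
        have h2' : (μ₀ / ρ) * ψ 2 = 0 := by
          linear_combination h2 - (μ₀ / (3 * ρ) * ω 1) * hs0
        exact (mul_eq_zero.mp h2').resolve_left hμρ.ne'
      have hψ3 : ψ 3 = 0 := by
        have h3' : (μ₀ / ρ) * ψ 3 = 0 := by
          linear_combination h3 - (μ₀ / (3 * ρ) * ω 2) * hs0
        exact (mul_eq_zero.mp h3').resolve_left hμρ.ne'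
      have hψ4 : ψ 4 = 0 := (mul_eq_zero.mp h4).resolve_left hαρ.ne'
      refine ⟨ψ 0, ?_⟩
      rw [hψeq]
      funext i
      fin_cases i <;> simp [hψ1, hψ2, hψ3, hψ4]
    · rintro ⟨t, rfl⟩
      rw [hψeq, hBmv]
      funext i
      fin_cases i <;> simp
  refine ⟨Matrix.posSemidef_iff_dotProduct_mulVec.mpr ⟨?_, ?_⟩, hker, ?_⟩
  · -- IsHermitian
    refine Matrix.IsHermitian.ext fun i j => ?_
    fin_cases i <;> fin_cases j <;>
      simp [BS, Matrix.vecHead, Matrix.vecTail] <;> ring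
  · -- quadratic form nonneg
    intro x
    simp only [star_trivial]
    rw [hBmv]
    simp only [dotProduct, Fin.sum_univ_five, Matrix.cons_val_zero,
      Matrix.cons_val_one, Matrix.head_cons, Matrix.cons_val_two, Matrix.tail_cons,
      Matrix.cons_val_three, Matrix.cons_val_four]
    nlinarith [mul_nonneg hcρ.le (sq_nonneg (ω 0 * x 1 + ω 1 * x 2 + ω 2 * x 3)),
      mul_nonneg hμρ.le (sq_nonneg (x 1)), mul_nonneg hμρ.le (sq_nonneg (x 2)),
      mul_nonneg hμρ.le (sq_nonneg (x 3)), mul_nonneg hαρ.le (sq_nonneg (x 4))]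
  · -- genuinely coupled
    intro μ ψ hψ hB
    obtain ⟨t, rfl⟩ := (hker ψ).mp hB
    have ht : t ≠ 0 := by
      intro h
      apply hψ
      rw [h]
      funext i; fin_cases i <;> simp
    rw [hψeq]
    intro hc
    have hAmv : (μ • (1 : Matrix (Fin 5) (Fin 5) ℝ) + AS) *ᵥ ![t, 0, 0, 0, 0] =
        ![(μ + uω) * t, sθ * ω 0 * t, sθ * ω 1 * t, sθ * ω 2 * t, 0] := by
      funext i
      fin_cases i <;>
        simp [AS, Matrix.mulVec, dotProduct, Fin.sum_univ_five,
          Matrix.add_apply, Matrix.smul_apply, Matrix.one_apply] <;> ring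
    rw [hAmv] at hc
    have h1 : sθ * ω 0 * t = 0 := by
      simpa only [Matrix.cons_val_one, Matrix.cons_val_zero, Matrix.head_cons, Pi.zero_apply] using congrFun hc 1
    have h2 : sθ * ω 1 * t = 0 := by
      simpa only [Matrix.cons_val_two, Matrix.tail_cons, Matrix.head_cons, Pi.zero_apply]
        using congrFun hc 2
    have h3 : sθ * ω 2 * t = 0 := by
      simpa only [Matrix.cons_val_three, Matrix.tail_cons, Matrix.head_cons, Pi.zero_apply]
        using congrFun hc 3
    have hω0 : ω 0 = 0 := by
      rcases mul_eq_zero.mp h1 with h | h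
      · rcases mul_eq_zero.mp h with h' | h'
        · exact absurd h' hsθ.ne'
        · exact h'
      · exact absurd h ht
    have hω1 : ω 1 = 0 := by
      rcases mul_eq_zero.mp h2 with h | h
      · rcases mul_eq_zero.mp h with h' | h'
        · exact absurd h' hsθ.ne'
        · exact h'
      · exact absurd h ht
    have hω2 : ω 2 = 0 := by
      rcases mul_eq_zero.mp h3 with h | h
      · rcases mul_eq_zero.mp h with h' | h'
        · exact absurd h' hsθ.ne'
        · exact h'
      · exact absurd h ht
    rw [hω0, hω1, hω2] at hω
    norm_num at hω
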